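/- Fix r_max > 0, K ∈ ℕ, ε > 0, ρ ≥ 0, and a partition of [N] into sets 𝒩* (size K), 𝒩ᶜ, 𝒩⁰, with MNL parameters v_i = 1/K + ε and r_i = r_max for i ∈ 𝒩*, v_i = 1/K and r_i = r_max for i ∈ 𝒩ᶜ, v_i = 1 and r_i = 0 for i ∈ 𝒩⁰ (and v_0 = 1, r_0 = 0). For any assortment S with |S| ≤ K, the constant-radius robust expected revenue satisfies R_ρ(S) = sup_{λ≥0} { −λ·log( e^{−r_max/λ} + (1 − e^{−r_max/λ}) / (1 + (1/K)·|S∩𝒩ᶜ|/(1+|S∩𝒩⁰|) + (1/K + ε)·|S∩𝒩*|/(1+|S∩𝒩⁰|)) ) − λρ }, and is maximized over all such S by S = 𝒩*. -/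

import Mathlib

open Finset

/-- Supremum over dual variables `λ ≥ 0` of a real-valued function. -/
noncomputable def dualSup (f : ℝ → ℝ) : ℝ := sSup (f '' Set.Ici (0 : ℝ))


set_option maxHeartbeats 1000000 in
private lemma hard_instance_sum_eq (N K : ℕ) (hK : 0 < K)
    (rmax ε : ℝ) (hε : 0 < ε)
    (Nstar Nc N0 : Finset ℕ)
    (hpart : Nstar ∪ Nc ∪ N0 = Finset.Icc 1 N)
    (hd1 : Disjoint Nstar Nc) (hd2 : Disjoint Nstar N0) (hd3 : Disjoint Nc N0)
    (v : ℕ → ℝ) (r : ℕ → ℝ)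
    (hv : ∀ i, v i = if i = 0 then 1 else
      if i ∈ Nstar then 1 / K + ε else if i ∈ Nc then 1 / K else 1)
    (hrdef : ∀ i, r i = if i = 0 ∨ i ∈ N0 then 0 else rmax)
    (S : Finset ℕ) (hS : S ⊆ Finset.Icc 1 N) (l : ℝ) :
    (∑ i ∈ insert 0 S, (v i / ∑ j ∈ insert 0 S, v j) * Real.exp (-(r i) / l))
      = Real.exp (-rmax / l) + (1 - Real.exp (-rmax / l)) /
          (1 + (1 / K) * ((S ∩ Nc).card : ℝ) / (1 + ((S ∩ N0).card : ℝ)) +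
            (1 / K + ε) * ((S ∩ Nstar).card : ℝ) / (1 + ((S ∩ N0).card : ℝ))) := by
  have hK0 : (0 : ℝ) < (K : ℝ) := by exact_mod_cast hK
  have hd12 : Disjoint (S ∩ Nstar) (S ∩ Nc) :=
    hd1.mono inter_subset_right inter_subset_right
  have hd33 : Disjoint ((S ∩ Nstar) ∪ (S ∩ Nc)) (S ∩ N0) :=
    Finset.disjoint_union_left.mpr
      ⟨hd2.mono inter_subset_right inter_subset_right,
       hd3.mono inter_subset_right inter_subset_right⟩
  have hdecomp : (S ∩ Nstar) ∪ (S ∩ Nc) ∪ (S ∩ N0) = S := by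
    rw [← Finset.inter_union_distrib_left, ← Finset.inter_union_distrib_left, hpart]
    exact Finset.inter_eq_left.mpr hS
  have h0 : (0 : ℕ) ∉ S := fun h => by simpa using (Finset.mem_Icc.mp (hS h)).1
  have hsplit : ∀ f : ℕ → ℝ,
      ∑ i ∈ S, f i = (∑ i ∈ S ∩ Nstar, f i) + (∑ i ∈ S ∩ Nc, f i) + (∑ i ∈ S ∩ N0, f i) := by
    intro f
    rw [← Finset.sum_union hd12, ← Finset.sum_union hd33, hdecomp]
  set a : ℝ := ((S ∩ Nstar).card : ℝ) with hadef
  set b : ℝ := ((S ∩ Nc).card : ℝ) with hbdef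
  set c : ℝ := ((S ∩ N0).card : ℝ) with hcdef
  have ha : 0 ≤ a := Nat.cast_nonneg _
  have hb : 0 ≤ b := Nat.cast_nonneg _
  have hc : 0 ≤ c := Nat.cast_nonneg _
  -- values of v, r on the pieces
  have hva : ∀ i ∈ S ∩ Nstar, v i = 1 / K + ε := by
    intro i hi
    obtain ⟨hiS, hiN⟩ := Finset.mem_inter.mp hi
    have hi0 : i ≠ 0 := fun h => h0 (h ▸ hiS)
    rw [hv i]; simp [hi0, hiN]
  have hra : ∀ i ∈ S ∩ Nstar, r i = rmax := by
    intro i hi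
    obtain ⟨hiS, hiN⟩ := Finset.mem_inter.mp hi
    have hi0 : i ≠ 0 := fun h => h0 (h ▸ hiS)
    have hiN0 : i ∉ N0 := fun h => (Finset.disjoint_left.mp hd2) hiN h
    rw [hrdef i]; simp [hi0, hiN0]
  have hvb : ∀ i ∈ S ∩ Nc, v i = 1 / K := by
    intro i hi
    obtain ⟨hiS, hiN⟩ := Finset.mem_inter.mp hi
    have hi0 : i ≠ 0 := fun h => h0 (h ▸ hiS)
    have hiNs : i ∉ Nstar := fun h => (Finset.disjoint_left.mp hd1) h hiN
    rw [hv i]; simp [hi0, hiNs, hiN]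
  have hrb : ∀ i ∈ S ∩ Nc, r i = rmax := by
    intro i hi
    obtain ⟨hiS, hiN⟩ := Finset.mem_inter.mp hi
    have hi0 : i ≠ 0 := fun h => h0 (h ▸ hiS)
    have hiN0 : i ∉ N0 := fun h => (Finset.disjoint_left.mp hd3) hiN h
    rw [hrdef i]; simp [hi0, hiN0]
  have hvc : ∀ i ∈ S ∩ N0, v i = 1 := by
    intro i hi
    obtain ⟨hiS, hiN⟩ := Finset.mem_inter.mp hi
    have hi0 : i ≠ 0 := fun h => h0 (h ▸ hiS)
    have hiNs : i ∉ Nstar := fun h => (Finset.disjoint_left.mp hd2) h hiN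
    have hiNc : i ∉ Nc := fun h => (Finset.disjoint_left.mp hd3) h hiN
    rw [hv i]; simp [hi0, hiNs, hiNc]
  have hrc : ∀ i ∈ S ∩ N0, r i = 0 := by
    intro i hi
    obtain ⟨_, hiN⟩ := Finset.mem_inter.mp hi
    rw [hrdef i]; simp [hiN]
  have hv0 : v 0 = 1 := by rw [hv 0]; simp
  have hr0 : r 0 = 0 := by rw [hrdef 0]; simp
  set T : ℝ := ∑ j ∈ insert 0 S, v j with hTdef
  set E : ℝ := Real.exp (-rmax / l) with hEdef
  have hT : T = 1 + c + ((1 / K + ε) * a + (1 / K) * b) := by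
    rw [hTdef, Finset.sum_insert h0, hsplit v, hv0,
      Finset.sum_congr rfl hva, Finset.sum_congr rfl hvb, Finset.sum_congr rfl hvc,
      Finset.sum_const, Finset.sum_const, Finset.sum_const, nsmul_eq_mul, nsmul_eq_mul,
      nsmul_eq_mul]
    rw [hadef, hbdef, hcdef]; ring
  have hnum : ∑ i ∈ insert 0 S, v i * Real.exp (-(r i) / l)
      = 1 + c + ((1 / K + ε) * a + (1 / K) * b) * E := by
    rw [Finset.sum_insert h0, hsplit (fun i => v i * Real.exp (-(r i) / l))]
    have e1 : ∑ i ∈ S ∩ Nstar, v i * Real.exp (-(r i) / l) = a * ((1 / K + ε) * E) := by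
      rw [Finset.sum_congr rfl (fun i hi => by rw [hva i hi, hra i hi]),
        Finset.sum_const, nsmul_eq_mul, hadef]
    have e2 : ∑ i ∈ S ∩ Nc, v i * Real.exp (-(r i) / l) = b * ((1 / K) * E) := by
      rw [Finset.sum_congr rfl (fun i hi => by rw [hvb i hi, hrb i hi]),
        Finset.sum_const, nsmul_eq_mul, hbdef]
    have e3 : ∑ i ∈ S ∩ N0, v i * Real.exp (-(r i) / l) = c := by
      rw [Finset.sum_congr rfl (fun i hi => by rw [hvc i hi, hrc i hi])]
      simp [hcdef]
    rw [e1, e2, e3, hv0, hr0]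
    simp only [neg_zero, zero_div, Real.exp_zero]
    ring
  have hTpos : 0 < T := by
    rw [hT]; positivity
  have hc1 : (0 : ℝ) < 1 + c := by positivity
  have hDpos : (0 : ℝ) < 1 + (1 / K) * b / (1 + c) + (1 / K + ε) * a / (1 + c) := by
    positivity
  calc (∑ i ∈ insert 0 S, (v i / T) * Real.exp (-(r i) / l))
      = (∑ i ∈ insert 0 S, v i * Real.exp (-(r i) / l)) / T := by
        rw [Finset.sum_div]
        exact Finset.sum_congr rfl fun i _ => by ring
    _ = E + (1 - E) /
          (1 + (1 / K) * b / (1 + c) + (1 / K + ε) * a / (1 + c)) := by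
        rw [hnum, hT]
        have hc1' : (1:ℝ) + c ≠ 0 := hc1.ne'
        have hTne : (1:ℝ) + c + ((1 / (K:ℝ) + ε) * a + (1 / (K:ℝ)) * b) ≠ 0 := by positivity
        have hDeq : 1 + (1 / (K:ℝ)) * b / (1 + c) + (1 / (K:ℝ) + ε) * a / (1 + c)
            = (1 + c + ((1 / (K:ℝ) + ε) * a + (1 / (K:ℝ)) * b)) / (1 + c) := by
          rw [add_assoc, ← add_div, add_div' _ _ _ hc1']
          congr 1
          ring
        rw [hDeq, div_div_eq_mul_div, add_div' _ _ _ hTne]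
        congr 1
        ring


/-- Hard-instance optimal robust assortment: partition `[N] = 𝒩* ∪ 𝒩ᶜ ∪ 𝒩⁰` with
`|𝒩*| = K`, MNL parameters `v i = 1/K + ε, r i = r_max` on `𝒩*`,
`v i = 1/K, r i = r_max` on `𝒩ᶜ`, `v i = 1, r i = 0` on `𝒩⁰` (and `v 0 = 1, r 0 = 0`).
For every assortment `S` with `|S| ≤ K`, the constant-radius robust expected revenue
(in its dual form) equals the displayed simplification, and it is maximized over all
such `S` by `S = 𝒩*`. -/
theorem hard_instance_optimal_robust_assortment (N K : ℕ) (hK : 0 < K)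
    (rmax ε ρ : ℝ) (hr : 0 < rmax) (hε : 0 < ε) (hρ : 0 ≤ ρ)
    (Nstar Nc N0 : Finset ℕ)
    (hpart : Nstar ∪ Nc ∪ N0 = Finset.Icc 1 N)
    (hd1 : Disjoint Nstar Nc) (hd2 : Disjoint Nstar N0) (hd3 : Disjoint Nc N0)
    (hcard : Nstar.card = K)
    (v : ℕ → ℝ) (r : ℕ → ℝ)
    (hv : ∀ i, v i = if i = 0 then 1 else
      if i ∈ Nstar then 1 / K + ε else if i ∈ Nc then 1 / K else 1)
    (hrdef : ∀ i, r i = if i = 0 ∨ i ∈ N0 then 0 else rmax) :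
    (∀ S : Finset ℕ, S ⊆ Finset.Icc 1 N → S.card ≤ K →
      dualSup (fun l =>
          -l * Real.log (∑ i ∈ insert 0 S,
              (v i / ∑ j ∈ insert 0 S, v j) * Real.exp (-(r i) / l)) - l * ρ) =
        dualSup (fun l =>
          -l * Real.log (Real.exp (-rmax / l) +
              (1 - Real.exp (-rmax / l)) /
                (1 + (1 / K) * ((S ∩ Nc).card : ℝ) / (1 + ((S ∩ N0).card : ℝ)) +
                  (1 / K + ε) * ((S ∩ Nstar).card : ℝ) / (1 + ((S ∩ N0).card : ℝ)))) -
            l * ρ)) ∧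
    (∀ S : Finset ℕ, S ⊆ Finset.Icc 1 N → S.card ≤ K →
      dualSup (fun l =>
          -l * Real.log (∑ i ∈ insert 0 S,
              (v i / ∑ j ∈ insert 0 S, v j) * Real.exp (-(r i) / l)) - l * ρ) ≤
        dualSup (fun l =>
          -l * Real.log (∑ i ∈ insert 0 Nstar,
              (v i / ∑ j ∈ insert 0 Nstar, v j) * Real.exp (-(r i) / l)) - l * ρ)) := by
  have hK1 : (1 : ℝ) ≤ (K : ℝ) := by exact_mod_cast hK
  have hK0 : (0 : ℝ) < (K : ℝ) := lt_of_lt_of_le one_pos hK1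
  -- decomposition of any S ⊆ [1,N]
  have hdecomp : ∀ S : Finset ℕ, S ⊆ Finset.Icc 1 N →
      (S ∩ Nstar) ∪ (S ∩ Nc) ∪ (S ∩ N0) = S := by
    intro S hS
    rw [← Finset.inter_union_distrib_left, ← Finset.inter_union_distrib_left, hpart]
    exact Finset.inter_eq_left.mpr hS
  have hd12 : ∀ S : Finset ℕ, Disjoint (S ∩ Nstar) (S ∩ Nc) :=
    fun S => hd1.mono inter_subset_right inter_subset_right
  have hd33 : ∀ S : Finset ℕ, Disjoint ((S ∩ Nstar) ∪ (S ∩ Nc)) (S ∩ N0) :=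
    fun S => Finset.disjoint_union_left.mpr
      ⟨hd2.mono inter_subset_right inter_subset_right,
       hd3.mono inter_subset_right inter_subset_right⟩
  have hsum := hard_instance_sum_eq N K hK rmax ε hε Nstar Nc N0 hpart hd1 hd2 hd3 v r hv hrdef
  -- subsets and cardinalities
  have hNstarsub : Nstar ⊆ Finset.Icc 1 N := by
    rw [← hpart]; exact subset_union_left.trans subset_union_left
  have hstar_c : Nstar ∩ Nc = ∅ := Finset.disjoint_iff_inter_eq_empty.mp hd1
  have hstar_0 : Nstar ∩ N0 = ∅ := Finset.disjoint_iff_inter_eq_empty.mp hd2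
  constructor
  · intro S hS _
    exact congrArg dualSup (funext fun l => by rw [hsum S hS l])
  · intro S hS hSK
    -- rewrite both sides in simplified form
    have eS : (fun l => -l * Real.log (∑ i ∈ insert 0 S,
          (v i / ∑ j ∈ insert 0 S, v j) * Real.exp (-(r i) / l)) - l * ρ)
        = fun l => -l * Real.log (Real.exp (-rmax / l) + (1 - Real.exp (-rmax / l)) /
            (1 + (1 / K) * ((S ∩ Nc).card : ℝ) / (1 + ((S ∩ N0).card : ℝ)) +
              (1 / K + ε) * ((S ∩ Nstar).card : ℝ) / (1 + ((S ∩ N0).card : ℝ)))) - l * ρ :=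
      funext fun l => by rw [hsum S hS l]
    have hDstar_eq : (1 + (1 / K) * ((Nstar ∩ Nc).card : ℝ) / (1 + ((Nstar ∩ N0).card : ℝ)) +
        (1 / K + ε) * ((Nstar ∩ Nstar).card : ℝ) / (1 + ((Nstar ∩ N0).card : ℝ)))
        = 1 + (1 / K + ε) * K := by
      rw [hstar_c, hstar_0, Finset.inter_self, hcard]
      simp
    have eStar : (fun l => -l * Real.log (∑ i ∈ insert 0 Nstar,
          (v i / ∑ j ∈ insert 0 Nstar, v j) * Real.exp (-(r i) / l)) - l * ρ)
        = fun l => -l * Real.log (Real.exp (-rmax / l) + (1 - Real.exp (-rmax / l)) /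
            (1 + (1 / K + ε) * K)) - l * ρ :=
      funext fun l => by rw [hsum Nstar hNstarsub l, hDstar_eq]
    rw [eS, eStar]
    set a : ℝ := ((S ∩ Nstar).card : ℝ) with hadef
    set b : ℝ := ((S ∩ Nc).card : ℝ) with hbdef
    set c : ℝ := ((S ∩ N0).card : ℝ) with hcdef
    have ha : 0 ≤ a := Nat.cast_nonneg _
    have hb : 0 ≤ b := Nat.cast_nonneg _
    have hc : 0 ≤ c := Nat.cast_nonneg _
    have habc : a + b + c ≤ (K : ℝ) := by
      have hcards : (S ∩ Nstar).card + (S ∩ Nc).card + (S ∩ N0).card = S.card := by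
        rw [← Finset.card_union_of_disjoint (hd12 S), ← Finset.card_union_of_disjoint (hd33 S),
          hdecomp S hS]
      have : ((S ∩ Nstar).card : ℝ) + ((S ∩ Nc).card : ℝ) + ((S ∩ N0).card : ℝ) ≤ (K : ℝ) := by
        exact_mod_cast (by omega : (S ∩ Nstar).card + (S ∩ Nc).card + (S ∩ N0).card ≤ K)
      exact this
    set DS : ℝ := 1 + (1 / K) * b / (1 + c) + (1 / K + ε) * a / (1 + c) with hDSdef
    set Dstar : ℝ := 1 + (1 / K + ε) * (K : ℝ) with hDstardef
    have hc1 : (0 : ℝ) < 1 + c := by positivity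
    have hDSpos : 0 < DS := by rw [hDSdef]; positivity
    have hDstarpos : 0 < Dstar := by rw [hDstardef]; positivity
    have hDD : DS ≤ Dstar := by
      rw [hDSdef, hDstardef]
      have hKc : (0:ℝ) ≤ (K:ℝ) * (1 + c) - (a + b) := by
        nlinarith [mul_nonneg (sub_nonneg.mpr hK1) hc]
      have h1 : (1 / (K:ℝ)) * b / (1 + c) + (1 / (K:ℝ) + ε) * a / (1 + c)
          ≤ (1 / (K:ℝ) + ε) * K := by
        rw [← add_div, div_le_iff₀ hc1]
        nlinarith [mul_nonneg hε.le hb,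
          mul_nonneg (le_of_lt (show (0:ℝ) < 1 / K + ε by positivity)) hKc]
      linarith
    -- pointwise comparison and uniform bound
    have key_le : ∀ l : ℝ, 0 ≤ l →
        -l * Real.log (Real.exp (-rmax / l) + (1 - Real.exp (-rmax / l)) / DS) - l * ρ ≤
        -l * Real.log (Real.exp (-rmax / l) + (1 - Real.exp (-rmax / l)) / Dstar) - l * ρ := by
      intro l hl
      rcases eq_or_lt_of_le hl with h0 | hlpos
      · rw [← h0]; simp
      · have hE0 : 0 < Real.exp (-rmax / l) := Real.exp_pos _
        have hEneg : -rmax / l < 0 := div_neg_of_neg_of_pos (neg_neg_of_pos hr) hlpos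
        have hE1 : Real.exp (-rmax / l) ≤ 1 := le_of_lt (Real.exp_lt_one_iff.mpr hEneg)
        have h1E : 0 ≤ 1 - Real.exp (-rmax / l) := by linarith
        have hGstar0 : 0 < Real.exp (-rmax / l) + (1 - Real.exp (-rmax / l)) / Dstar :=
          add_pos_of_pos_of_nonneg hE0 (div_nonneg h1E hDstarpos.le)
        have hGle : Real.exp (-rmax / l) + (1 - Real.exp (-rmax / l)) / Dstar ≤
            Real.exp (-rmax / l) + (1 - Real.exp (-rmax / l)) / DS :=
          add_le_add_right (div_le_div_of_nonneg_left h1E hDSpos hDD) _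
        have hlog := Real.log_le_log hGstar0 hGle
        have hmul := mul_le_mul_of_nonpos_left hlog (neg_nonpos.mpr hl)
        linarith
    have hbound : ∀ l : ℝ, 0 ≤ l →
        -l * Real.log (Real.exp (-rmax / l) + (1 - Real.exp (-rmax / l)) / Dstar) - l * ρ
          ≤ rmax := by
      intro l hl
      rcases eq_or_lt_of_le hl with h0 | hlpos
      · rw [← h0]; simpa using hr.le
      · have hE0 : 0 < Real.exp (-rmax / l) := Real.exp_pos _
        have hEneg : -rmax / l < 0 := div_neg_of_neg_of_pos (neg_neg_of_pos hr) hlpos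
        have hE1 : Real.exp (-rmax / l) ≤ 1 := le_of_lt (Real.exp_lt_one_iff.mpr hEneg)
        have h1E : 0 ≤ 1 - Real.exp (-rmax / l) := by linarith
        have hGE : Real.exp (-rmax / l) ≤
            Real.exp (-rmax / l) + (1 - Real.exp (-rmax / l)) / Dstar :=
          le_add_of_nonneg_right (div_nonneg h1E hDstarpos.le)
        have hlog := Real.log_le_log hE0 hGE
        rw [Real.log_exp] at hlog
        have hmul := mul_le_mul_of_nonpos_left hlog (neg_nonpos.mpr hl)
        have h3 : -l * (-rmax / l) = rmax := by field_simp
        have h4 : 0 ≤ l * ρ := mul_nonneg hl hρ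
        linarith
    unfold dualSup
    refine csSup_le ⟨_, Set.mem_image_of_mem _ Set.self_mem_Ici⟩ ?_
    rintro x ⟨l, hl, rfl⟩
    exact (key_le l hl).trans
      (le_csSup ⟨rmax, by rintro y ⟨m, hm, rfl⟩; exact hbound m hm⟩
        (Set.mem_image_of_mem _ hl))
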